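/- The equation tan(kx) = k·tan(x) with x ∈ (0, π) and x ≠ π/2, kx not an odd multiple of π/2, has no solution when 1 < k ≤ 2 and no solution when k = 3. -/

import Mathlib

open Real

lemma Gpos_aux (k x : ℝ) (hk1 : 1 < k) (hk2 : k ≤ 2) (hx0 : 0 < x) (hxpi : x < π) :
    0 < (k+1) * Real.sin ((k-1)*x) - (k-1) * Real.sin ((k+1)*x) := by
  have hk0 : (0:ℝ) < k := by linarith
  set G : ℝ → ℝ := fun y => (k+1) * Real.sin ((k-1)*y) - (k-1) * Real.sin ((k+1)*y) with hGdef
  have hd : ∀ y : ℝ, HasDerivAt G ((k^2-1) * (2 * Real.sin (k*y) * Real.sin y)) y := by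
    intro y
    have h1 : HasDerivAt (fun y : ℝ => Real.sin ((k-1)*y)) (Real.cos ((k-1)*y) * ((k-1)*1)) y :=
      (Real.hasDerivAt_sin ((k-1)*y)).comp y ((hasDerivAt_id y).const_mul (k-1))
    have h2 : HasDerivAt (fun y : ℝ => Real.sin ((k+1)*y)) (Real.cos ((k+1)*y) * ((k+1)*1)) y :=
      (Real.hasDerivAt_sin ((k+1)*y)).comp y ((hasDerivAt_id y).const_mul (k+1))
    have h3 := (h1.const_mul (k+1)).sub (h2.const_mul (k-1))
    refine h3.congr_deriv (Eq.symm ?_)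
    have hc := Real.cos_sub_cos ((k-1)*y) ((k+1)*y)
    have e1 : ((k-1)*y + (k+1)*y)/2 = k*y := by ring
    have e2 : ((k-1)*y - (k+1)*y)/2 = -y := by ring
    rw [e1, e2, Real.sin_neg] at hc
    linear_combination (1 - k^2) * hc
  have hcont : Continuous G := by fun_prop
  have hpik : π / k < π := div_lt_self pi_pos hk1
  have hpik0 : 0 < π / k := div_pos pi_pos hk0
  have hmono : StrictMonoOn G (Set.Icc 0 (π/k)) := by
    apply strictMonoOn_of_deriv_pos (convex_Icc _ _) hcont.continuousOn
    intro y hy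
    rw [interior_Icc] at hy
    rw [(hd y).deriv]
    have h1 : 0 < Real.sin y := Real.sin_pos_of_pos_of_lt_pi hy.1 (lt_trans hy.2 hpik)
    have h2 : 0 < Real.sin (k*y) := by
      apply Real.sin_pos_of_pos_of_lt_pi (mul_pos hk0 hy.1)
      have := (lt_div_iff₀ hk0).mp hy.2
      nlinarith
    have hk2' : 0 < k^2 - 1 := by nlinarith
    exact mul_pos hk2' (mul_pos (mul_pos two_pos h2) h1)
  have hanti : StrictAntiOn G (Set.Icc (π/k) π) := by
    apply strictAntiOn_of_deriv_neg (convex_Icc _ _) hcont.continuousOn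
    intro y hy
    rw [interior_Icc] at hy
    rw [(hd y).deriv]
    have h1 : 0 < Real.sin y := Real.sin_pos_of_pos_of_lt_pi (lt_trans hpik0 hy.1) hy.2
    have h2 : Real.sin (k*y) < 0 := by
      have hky1 : π < k*y := (div_lt_iff₀' hk0).mp hy.1
      have hky2 : k*y < 2*π := by nlinarith [pi_pos, hy.2]
      have hp : 0 < Real.sin (k*y - π) := Real.sin_pos_of_pos_of_lt_pi (by linarith) (by linarith)
      have h := Real.sin_add (k*y - π) π
      rw [Real.cos_pi, Real.sin_pi, show k*y - π + π = k*y from by ring] at h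
      linarith
    have hk2' : 0 < k^2 - 1 := by nlinarith
    exact mul_neg_of_pos_of_neg hk2' (mul_neg_of_neg_of_pos (by linarith) h1)
  have hG0 : G 0 = 0 := by simp [hGdef]
  have hGpi : 0 ≤ G π := by
    have e : (k+1)*π = (k-1)*π + 2*π := by ring
    have hs : Real.sin ((k+1)*π) = Real.sin ((k-1)*π) := by
      rw [e, Real.sin_add_two_pi]
    have hnn : 0 ≤ Real.sin ((k-1)*π) :=
      Real.sin_nonneg_of_nonneg_of_le_pi (by nlinarith [pi_pos]) (by nlinarith [pi_pos])
    simp only [hGdef]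
    rw [hs]
    nlinarith
  rcases le_or_gt x (π/k) with h | h
  · have := hmono (Set.left_mem_Icc.mpr hpik0.le) ⟨hx0.le, h⟩ hx0
    rw [hG0] at this
    show (0:ℝ) < G x
    exact this
  · have := hanti ⟨h.le, hxpi.le⟩ (Set.right_mem_Icc.mpr hpik.le) hxpi
    show (0:ℝ) < G x
    linarith

theorem tan_kx_ne_k_tan_x (k x : ℝ) (hk : (1 < k ∧ k ≤ 2) ∨ k = 3)
    (hx : x ∈ Set.Ioo 0 Real.pi) (hx2 : x ≠ Real.pi / 2)
    (hkx : Real.cos (k * x) ≠ 0) :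
    Real.tan (k * x) ≠ k * Real.tan x := by
  obtain ⟨hx0, hxpi⟩ := hx
  have hs : 0 < Real.sin x := Real.sin_pos_of_pos_of_lt_pi hx0 hxpi
  have hcosx : Real.cos x ≠ 0 := by
    intro h
    obtain ⟨n, hn⟩ := Real.cos_eq_zero_iff.mp h
    have hpi := Real.pi_pos
    have hn0 : n = 0 := by
      by_contra hne
      rcases lt_or_gt_of_ne hne with h1 | h1
      · have : (n:ℝ) ≤ -1 := by exact_mod_cast Int.le_sub_one_of_lt h1 |>.trans (by simp)
        nlinarith
      · have : (1:ℝ) ≤ (n:ℝ) := by exact_mod_cast h1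
        nlinarith
    rw [hn0] at hn
    apply hx2
    rw [hn]; ring
  intro heq
  rw [Real.tan_eq_sin_div_cos, Real.tan_eq_sin_div_cos] at heq
  have key : Real.sin (k*x) * Real.cos x = k * Real.sin x * Real.cos (k*x) := by
    field_simp at heq
    linarith [heq]
  have hsc : Real.sin x ^ 2 + Real.cos x ^ 2 = 1 := Real.sin_sq_add_cos_sq x
  rcases hk with ⟨hk1, hk2⟩ | hk3
  · -- 1 < k ≤ 2
    have hG := Gpos_aux k x hk1 hk2 hx0 hxpi
    have e1 : (k-1)*x = k*x - x := by ring
    have e2 : (k+1)*x = k*x + x := by ring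
    rw [e1, e2, Real.sin_sub, Real.sin_add] at hG
    nlinarith [key]
  · -- k = 3
    subst hk3
    rw [show (3:ℝ)*x = 3*x from rfl] at key
    have h3s : Real.sin (3*x) = 3 * Real.sin x - 4 * Real.sin x ^ 3 := Real.sin_three_mul x
    have h3c : Real.cos (3*x) = 4 * Real.cos x ^ 3 - 3 * Real.cos x := Real.cos_three_mul x
    rw [h3s, h3c] at key
    have h8 : 8 * Real.sin x ^ 3 * Real.cos x = 0 := by
      linear_combination key + 12 * Real.sin x * Real.cos x * hsc
    have := mul_ne_zero (pow_ne_zero 3 hs.ne') hcosx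
    exact this (by linarith)
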